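/- Let D, r be positive integers with r ≤ D and let d be a positive integer with r ≤ d. Let B ∈ ℝ^{D×r} have entries drawn i.i.d. from the standard Gaussian distribution, let A ∈ ℝ^{r×d} have entries drawn i.i.d. from the standard Gaussian distribution, let Λ ∈ ℝ^{r×r} be a diagonal matrix whose diagonal entries are drawn i.i.d. from the standard Gaussian distribution, and let Γ ∈ ℝ^{d×d} be a diagonal matrix whose diagonal entries are drawn i.i.d. from the standard Gaussian distribution, with all draws independent. Then with probability 1 the D×d matrix B Λ A Γ has rank exactly r. -/

import Mathlib

open MeasureTheory ProbabilityTheory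
open MvPolynomial

lemma measurable_mveval {σ : Type*} [MeasurableSpace (σ → ℝ)]
    (hco : ∀ i : σ, Measurable fun x : σ → ℝ => x i)
    (p : MvPolynomial σ ℝ) : Measurable fun x : σ → ℝ => eval x p := by
  induction p using MvPolynomial.induction_on with
  | C a => simpa using measurable_const
  | add p q hp hq => simpa [Pi.add_def] using hp.add hq
  | mul_X p n hp => simpa [Pi.mul_def] using hp.mul (hco n)

lemma gaussianReal_finite_null {s : Set ℝ} (hs : s.Finite) : gaussianReal 0 1 s = 0 :=
  gaussianReal_absolutelyContinuous 0 (one_ne_zero) (hs.measure_zero _)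

lemma aux1 : ∀ (n : ℕ) (p : MvPolynomial (Fin n) ℝ), p ≠ 0 →
    (Measure.pi fun _ : Fin n => gaussianReal 0 1) {x | eval x p = 0} = 0 := by
  intro n
  induction n with
  | zero =>
    intro p hp
    obtain ⟨c, rfl⟩ := C_surjective (Fin 0) p
    have hc : c ≠ 0 := fun h => hp (by simp [h])
    have h0 : {x : Fin 0 → ℝ | eval x (C c) = 0} = ∅ := by
      ext x; simp [hc]
    rw [h0, measure_empty]
  | succ n ih =>
    intro p hp
    set S : Set (Fin (n+1) → ℝ) := {x | eval x p = 0} with hS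
    have hmeas : MeasurableSet S :=
      (measurable_mveval (fun i => measurable_pi_apply i) p) (measurableSet_singleton 0)
    have h1 := (measurePreserving_piFinSuccAbove (fun _ : Fin (n+1) => gaussianReal 0 1) 0).symm
    have h2 : (Measure.pi fun _ : Fin (n+1) => gaussianReal 0 1) S
        = ((gaussianReal 0 1).prod (Measure.pi fun _ : Fin n => gaussianReal 0 1))
          ((MeasurableEquiv.piFinSuccAbove (fun _ => ℝ) 0).symm ⁻¹' S) :=
      (h1.measure_preimage hmeas.nullMeasurableSet).symm
    rw [h2]
    have hpre : (MeasurableEquiv.piFinSuccAbove (fun _ : Fin (n+1) => ℝ) 0).symm ⁻¹' S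
        = {q : ℝ × (Fin n → ℝ) | eval (Fin.cons q.1 q.2) p = 0} := by
      ext ⟨t, x⟩
      simp [S, MeasurableEquiv.piFinSuccAbove_symm_apply, Fin.insertNth_zero', Fin.consEquiv]
    rw [hpre]
    -- swap coordinates
    have hswap : ((gaussianReal 0 1).prod (Measure.pi fun _ : Fin n => gaussianReal 0 1))
          {q : ℝ × (Fin n → ℝ) | eval (Fin.cons q.1 q.2) p = 0}
        = (((Measure.pi fun _ : Fin n => gaussianReal 0 1)).prod (gaussianReal 0 1))
          {q : (Fin n → ℝ) × ℝ | eval (Fin.cons q.2 q.1) p = 0} := by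
      rw [← Measure.prod_swap]
      rw [Measure.map_apply measurable_swap]
      · rfl
      · have : Measurable fun q : ℝ × (Fin n → ℝ) => eval (Fin.cons q.1 q.2) p := by
          apply (measurable_mveval (fun i => measurable_pi_apply i) p).comp
          refine measurable_pi_iff.mpr fun i => ?_
          refine Fin.cases ?_ (fun j => ?_) i
          · simpa using measurable_fst
          · simpa [Function.comp_def] using (measurable_pi_apply j).comp measurable_snd
        exact this (measurableSet_singleton 0)
    rw [hswap]
    have hmeas2 : MeasurableSet {q : (Fin n → ℝ) × ℝ | eval (Fin.cons q.2 q.1) p = 0} := by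
      have : Measurable fun q : (Fin n → ℝ) × ℝ => eval (Fin.cons q.2 q.1) p := by
        apply (measurable_mveval (fun i => measurable_pi_apply i) p).comp
        refine measurable_pi_iff.mpr fun i => ?_
        refine Fin.cases ?_ (fun j => ?_) i
        · simpa using measurable_snd
        · simpa [Function.comp_def] using (measurable_pi_apply j).comp measurable_fst
      exact this (measurableSet_singleton 0)
    rw [Measure.measure_prod_null hmeas2]
    -- the polynomial in the first variable
    set q : Polynomial (MvPolynomial (Fin n) ℝ) := finSuccEquiv ℝ n p with hq
    have hqne : q ≠ 0 := by
      intro h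
      apply hp
      rw [hq] at h
      have h2 := congrArg (finSuccEquiv ℝ n).symm h
      simpa using h2
    obtain ⟨k, hk⟩ : ∃ k, q.coeff k ≠ 0 := by
      by_contra h
      push_neg at h
      exact hqne (Polynomial.ext fun k => by simp [h k])
    have hae : ∀ᵐ x ∂(Measure.pi fun _ : Fin n => gaussianReal 0 1),
        eval x (q.coeff k) ≠ 0 := by
      rw [ae_iff]
      simpa using ih (q.coeff k) hk
    filter_upwards [hae] with x hx
    have hqx : (q.map (eval x)) ≠ 0 := by
      intro h
      apply hx
      have := congrArg (fun P => Polynomial.coeff P k) h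
      simpa [Polynomial.coeff_map] using this
    have hsub : {t : ℝ | eval (Fin.cons t x) p = 0}
        ⊆ {t : ℝ | (q.map (eval x)).IsRoot t} := by
      intro t ht
      simp only [Set.mem_setOf_eq] at ht ⊢
      rw [Polynomial.IsRoot, ← eval_eq_eval_mv_eval']
      exact ht
    have : (fun t : ℝ => eval (Fin.cons t x) p = 0) = fun t => t ∈ {t : ℝ | eval (Fin.cons t x) p = 0} := rfl
    refine measure_mono_null ?_ (gaussianReal_finite_null (Polynomial.finite_setOf_isRoot hqx))
    intro t ht
    exact hsub ht

/-- Splitting off the first row of a rectangular index set. -/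
def rowSplit (m n : ℕ) : (Fin (m+1) × Fin n) ≃ (Fin n ⊕ (Fin m × Fin n)) where
  toFun q := Fin.cases (Sum.inl q.2) (fun i => Sum.inr (i, q.2)) q.1
  invFun s := Sum.elim (fun j => (0, j)) (fun q => (q.1.succ, q.2)) s
  left_inv := by
    rintro ⟨i, j⟩
    refine Fin.cases ?_ (fun i' => ?_) i <;> simp
  right_inv := by
    rintro (j | ⟨i, j⟩) <;> simp

lemma eval_sumToIter {S T : Type*} (v : S → ℝ) (y : T → ℝ) (w : MvPolynomial (S ⊕ T) ℝ) :
    eval v (MvPolynomial.map (eval y) (sumToIter ℝ S T w)) = eval (Sum.elim v y) w := by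
  induction w using MvPolynomial.induction_on with
  | C a => simp [sumToIter_C]
  | add p q hp hq => simp [map_add, hp, hq]
  | mul_X p s hp => cases s <;> simp [sumToIter_Xl, sumToIter_Xr, map_mul, hp]

set_option maxHeartbeats 1000000 in
lemma aux2 : ∀ (m : ℕ) {n : ℕ} (p : MvPolynomial (Fin m × Fin n) ℝ), p ≠ 0 →
    (Measure.pi fun _ : Fin m => Measure.pi fun _ : Fin n => gaussianReal 0 1)
      {x | eval (fun q => x q.1 q.2) p = 0} = 0 := by
  intro m
  induction m with
  | zero =>
    intro n p hp
    obtain ⟨c, rfl⟩ := C_surjective (Fin 0 × Fin n) p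
    have hc : c ≠ 0 := fun h => hp (by simp [h])
    have h0 : {x : Fin 0 → Fin n → ℝ | eval (fun q : Fin 0 × Fin n => x q.1 q.2) (C c) = 0} = ∅ := by
      ext x; simp [hc]
    rw [h0, measure_empty]
  | succ m ih =>
    intro n p hp
    set S : Set (Fin (m+1) → Fin n → ℝ) := {x | eval (fun q => x q.1 q.2) p = 0} with hS
    have hmeasF : Measurable fun x : Fin (m+1) → Fin n → ℝ =>
        eval (fun q : Fin (m+1) × Fin n => x q.1 q.2) p := by
      refine (measurable_mveval (fun i => measurable_pi_apply i) p).comp ?_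
      exact measurable_pi_iff.mpr fun q => (measurable_pi_apply q.2).comp (measurable_pi_apply q.1)
    have hmeas : MeasurableSet S := hmeasF (measurableSet_singleton 0)
    have h1 := (measurePreserving_piFinSuccAbove
      (fun _ : Fin (m+1) => Measure.pi fun _ : Fin n => gaussianReal 0 1) 0).symm
    have h2 := (h1.measure_preimage hmeas.nullMeasurableSet).symm
    rw [h2]
    have hpre : (MeasurableEquiv.piFinSuccAbove (fun _ : Fin (m+1) => Fin n → ℝ) 0).symm ⁻¹' S
        = {q : (Fin n → ℝ) × (Fin m → Fin n → ℝ) |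
            eval (fun z : Fin (m+1) × Fin n => (Fin.cons q.1 q.2 : Fin (m+1) → Fin n → ℝ) z.1 z.2) p = 0} := by
      ext ⟨v, y⟩
      simp [S, MeasurableEquiv.piFinSuccAbove_symm_apply, Fin.insertNth_zero', Fin.consEquiv]
    rw [hpre]
    have hmeas2 : MeasurableSet {q : (Fin m → Fin n → ℝ) × (Fin n → ℝ) |
        eval (fun z : Fin (m+1) × Fin n => (Fin.cons q.2 q.1 : Fin (m+1) → Fin n → ℝ) z.1 z.2) p = 0} := by
      have hm : Measurable fun q : (Fin m → Fin n → ℝ) × (Fin n → ℝ) =>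
          eval (fun z : Fin (m+1) × Fin n =>
            (Fin.cons q.2 q.1 : Fin (m+1) → Fin n → ℝ) z.1 z.2) p := by
        refine (measurable_mveval (fun i => measurable_pi_apply i) p).comp ?_
        refine measurable_pi_iff.mpr fun z => ?_
        refine Fin.cases ?_ (fun i => ?_) z.1
        · simpa using measurable_snd.eval
        · simpa using measurable_fst.eval.eval
      exact hm (measurableSet_singleton 0)
    have hswap : ((Measure.pi fun _ : Fin n => gaussianReal 0 1).prod
          (Measure.pi fun _ : Fin m => Measure.pi fun _ : Fin n => gaussianReal 0 1))
          {q : (Fin n → ℝ) × (Fin m → Fin n → ℝ) |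
            eval (fun z : Fin (m+1) × Fin n => (Fin.cons q.1 q.2 : Fin (m+1) → Fin n → ℝ) z.1 z.2) p = 0}
        = ((Measure.pi fun _ : Fin m => Measure.pi fun _ : Fin n => gaussianReal 0 1).prod
            (Measure.pi fun _ : Fin n => gaussianReal 0 1))
          {q : (Fin m → Fin n → ℝ) × (Fin n → ℝ) |
            eval (fun z : Fin (m+1) × Fin n => (Fin.cons q.2 q.1 : Fin (m+1) → Fin n → ℝ) z.1 z.2) p = 0} := by
      have hmeas1 : MeasurableSet {q : (Fin n → ℝ) × (Fin m → Fin n → ℝ) |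
          eval (fun z : Fin (m+1) × Fin n =>
            (Fin.cons q.1 q.2 : Fin (m+1) → Fin n → ℝ) z.1 z.2) p = 0} := by
        have hm : Measurable fun q : (Fin n → ℝ) × (Fin m → Fin n → ℝ) =>
            eval (fun z : Fin (m+1) × Fin n =>
              (Fin.cons q.1 q.2 : Fin (m+1) → Fin n → ℝ) z.1 z.2) p := by
          refine (measurable_mveval (fun i => measurable_pi_apply i) p).comp ?_
          refine measurable_pi_iff.mpr fun z => ?_
          refine Fin.cases ?_ (fun i => ?_) z.1
          · simpa using measurable_fst.eval
          · simpa using measurable_snd.eval.eval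
        exact hm (measurableSet_singleton 0)
      conv_lhs => rw [← Measure.prod_swap]
      rw [Measure.map_apply measurable_swap hmeas1]
      rfl
    rw [hswap, Measure.measure_prod_null hmeas2]
    -- split variables
    set w : MvPolynomial (Fin n ⊕ (Fin m × Fin n)) ℝ := rename (rowSplit m n) p with hw
    have hwne : w ≠ 0 := by
      intro h
      exact hp ((map_eq_zero_iff _ (rename_injective _ (rowSplit m n).injective)).mp h)
    set P : MvPolynomial (Fin n) (MvPolynomial (Fin m × Fin n) ℝ) :=
      sumToIter ℝ (Fin n) (Fin m × Fin n) w with hP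
    have hPne : P ≠ 0 := by
      intro h
      apply hwne
      have : (sumAlgEquiv ℝ (Fin n) (Fin m × Fin n)) w = 0 := by
        have key : ∀ u, sumAlgEquiv ℝ (Fin n) (Fin m × Fin n) u
            = sumToIter ℝ (Fin n) (Fin m × Fin n) u := fun u => by
          induction u using MvPolynomial.induction_on with
          | C a => rw [sumAlgEquiv_C_inl, sumToIter_C]
          | add p q hp hq => rw [map_add, map_add, hp, hq]
          | mul_X p s hp =>
            rcases s with s | s <;> rw [map_mul, map_mul, hp] <;>
              simp only [sumAlgEquiv_X_inl, sumAlgEquiv_X_inr, sumToIter_Xl, sumToIter_Xr]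
        rw [key]
        exact h
      simpa using (map_eq_zero_iff _ (sumAlgEquiv ℝ (Fin n) (Fin m × Fin n)).injective).mp this
    obtain ⟨k, hk⟩ := ne_zero_iff.mp hPne
    have hae : ∀ᵐ y ∂(Measure.pi fun _ : Fin m => Measure.pi fun _ : Fin n => gaussianReal 0 1),
        eval (fun q : Fin m × Fin n => y q.1 q.2) (coeff k P) ≠ 0 := by
      rw [ae_iff]
      simpa using ih (coeff k P) hk
    filter_upwards [hae] with y hy
    set qy : MvPolynomial (Fin n) ℝ :=
      MvPolynomial.map (eval fun q : Fin m × Fin n => y q.1 q.2) P with hqy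
    have hqyne : qy ≠ 0 := by
      intro h
      apply hy
      have := congrArg (coeff k) h
      simpa [qy, coeff_map] using this
    have heq : ∀ v : Fin n → ℝ, eval v qy = eval (fun z : Fin (m+1) × Fin n =>
        (Fin.cons v y : Fin (m+1) → Fin n → ℝ) z.1 z.2) p := by
      intro v
      rw [hqy, hP, eval_sumToIter, hw, eval_rename]
      have hfun : ((Sum.elim v fun q : Fin m × Fin n => y q.1 q.2) ∘ (rowSplit m n))
          = fun z : Fin (m+1) × Fin n => (Fin.cons v y : Fin (m+1) → Fin n → ℝ) z.1 z.2 := by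
        funext z
        rcases z with ⟨i, j⟩
        refine Fin.cases ?_ (fun i' => ?_) i <;> simp [rowSplit]
      rw [hfun]
    have hset : Prod.mk y ⁻¹' {q : (Fin m → Fin n → ℝ) × (Fin n → ℝ) |
          eval (fun z : Fin (m+1) × Fin n =>
            (Fin.cons q.2 q.1 : Fin (m+1) → Fin n → ℝ) z.1 z.2) p = 0}
        = {v : Fin n → ℝ | eval v qy = 0} := by
      ext v
      simp only [Set.mem_preimage, Set.mem_setOf_eq, heq v]
    rw [hset]
    exact aux1 n qy hqyne

/-- The law of a random vector in `ℝ^k` with i.i.d. standard Gaussian entries. -/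
noncomputable def gaussVec (k : ℕ) : Measure (Fin k → ℝ) :=
  Measure.pi fun _ => gaussianReal 0 1

/-- The law of a random `m × k` real matrix (as a function) with i.i.d. standard
Gaussian entries. -/
noncomputable def gaussMat (m k : ℕ) : Measure (Fin m → Fin k → ℝ) :=
  Measure.pi fun _ => Measure.pi fun _ => gaussianReal 0 1

instance (k : ℕ) : IsProbabilityMeasure (gaussVec k) := by unfold gaussVec; infer_instance
instance (m k : ℕ) : IsProbabilityMeasure (gaussMat m k) := by unfold gaussMat; infer_instance

lemma prod_fst_null {α β : Type*} [MeasurableSpace α] [MeasurableSpace β]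
    (μ : Measure α) (ν : Measure β) [SFinite μ] [SFinite ν] {S : Set α} (hS : μ S = 0) :
    (μ.prod ν) (Prod.fst ⁻¹' S) = 0 := by
  have h : Prod.fst ⁻¹' S = S ×ˢ (Set.univ : Set β) := by ext ⟨a, b⟩; simp
  rw [h, Measure.prod_prod, hS, zero_mul]

lemma prod_snd_null {α β : Type*} [MeasurableSpace α] [MeasurableSpace β]
    (μ : Measure α) (ν : Measure β) [SFinite μ] [SFinite ν] {T : Set β} (hT : ν T = 0) :
    (μ.prod ν) (Prod.snd ⁻¹' T) = 0 := by
  have h : Prod.snd ⁻¹' T = (Set.univ : Set α) ×ˢ T := by ext ⟨a, b⟩; simp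
  rw [h, Measure.prod_prod, hT, mul_zero]

lemma rank_BLAG {D d r : ℕ} (hrD : r ≤ D) (hrd : r ≤ d)
    (B : Matrix (Fin D) (Fin r) ℝ) (A : Matrix (Fin r) (Fin d) ℝ)
    (l : Fin r → ℝ) (g : Fin d → ℝ)
    (hB : (B.submatrix (Fin.castLE hrD) id).det ≠ 0)
    (hA : (A.submatrix id (Fin.castLE hrd)).det ≠ 0)
    (hl : ∀ i, l i ≠ 0) (hg : ∀ j, g j ≠ 0) :
    (B * Matrix.diagonal l * A * Matrix.diagonal g).rank = r := by
  set M := B * Matrix.diagonal l * A * Matrix.diagonal g with hM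
  refine le_antisymm ?_ ?_
  · calc M.rank ≤ (B * Matrix.diagonal l * A).rank := Matrix.rank_mul_le_left _ _
      _ ≤ (B * Matrix.diagonal l).rank := Matrix.rank_mul_le_left _ _
      _ ≤ B.rank := Matrix.rank_mul_le_left _ _
      _ ≤ r := Matrix.rank_le_width B
  · set S := M.submatrix (Fin.castLE hrD) (Fin.castLE hrd) with hS
    have hSfact : S = ((B.submatrix (Fin.castLE hrD) id * Matrix.diagonal l)
        * A.submatrix id (Fin.castLE hrd)) * Matrix.diagonal (g ∘ Fin.castLE hrd) := by
      ext i j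
      simp [hS, hM, Matrix.mul_apply, Matrix.diagonal_apply, Matrix.submatrix_apply,
        ite_mul, mul_ite, Finset.sum_ite_eq, Finset.sum_ite_eq']
    have hdet : S.det ≠ 0 := by
      rw [hSfact, Matrix.det_mul, Matrix.det_mul, Matrix.det_mul, Matrix.det_diagonal,
        Matrix.det_diagonal]
      exact mul_ne_zero (mul_ne_zero (mul_ne_zero hB
        (Finset.prod_ne_zero_iff.mpr fun i _ => hl i)) hA)
        (Finset.prod_ne_zero_iff.mpr fun j _ => hg (Fin.castLE hrd j))
    have hrankS : S.rank = r := by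
      rw [Matrix.rank_of_isUnit _ ((Matrix.isUnit_iff_isUnit_det _).mpr hdet.isUnit)]
      simp
    set E : Matrix (Fin r) (Fin D) ℝ :=
      Matrix.of fun i k => if k = Fin.castLE hrD i then 1 else 0 with hE
    set F : Matrix (Fin d) (Fin r) ℝ :=
      Matrix.of fun k j => if k = Fin.castLE hrd j then 1 else 0 with hF
    have hS2 : S = E * M * F := by
      ext i j
      simp [hS, hE, hF, Matrix.mul_apply, ite_mul, mul_ite]
    calc r = S.rank := hrankS.symm
      _ = (E * M * F).rank := by rw [hS2]
      _ ≤ (E * M).rank := Matrix.rank_mul_le_left _ _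
      _ ≤ M.rank := Matrix.rank_mul_le_right _ _

theorem randlora_term_full_rank
    (D d r : ℕ) (hD : 0 < D) (hd : 0 < d) (hr : 0 < r)
    (hrD : r ≤ D) (hrd : r ≤ d) :
    ∀ᵐ x ∂((gaussMat D r).prod ((gaussMat r d).prod ((gaussVec r).prod (gaussVec d)))),
      (Matrix.of x.1 * Matrix.diagonal x.2.2.1 * Matrix.of x.2.1 *
        Matrix.diagonal x.2.2.2).rank = r := by
  classical
  -- Event 1: top `r × r` minor of `B`
  have hS1 : gaussMat D r
      {x : Fin D → Fin r → ℝ | (Matrix.of fun i j : Fin r => x (Fin.castLE hrD i) j).det = 0}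
        = 0 := by
    set pB : MvPolynomial (Fin D × Fin r) ℝ :=
      (Matrix.of fun i j : Fin r => (X (Fin.castLE hrD i, j) : MvPolynomial (Fin D × Fin r) ℝ)).det
      with hpB
    have hev : ∀ x : Fin D → Fin r → ℝ, eval (fun q : Fin D × Fin r => x q.1 q.2) pB
        = (Matrix.of fun i j : Fin r => x (Fin.castLE hrD i) j).det := by
      intro x
      rw [hpB, RingHom.map_det]
      congr 1
      ext i j
      simp
    have hne : pB ≠ 0 := by
      intro h
      have h1 := hev (fun a b => if (a : ℕ) = (b : ℕ) then 1 else 0)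
      rw [h] at h1
      have h2 : (Matrix.of fun i j : Fin r =>
          (if ((Fin.castLE hrD i : Fin D) : ℕ) = (j : ℕ) then (1:ℝ) else 0))
          = (1 : Matrix (Fin r) (Fin r) ℝ) := by
        ext i j
        simp [Matrix.one_apply, Fin.ext_iff]
      rw [h2] at h1
      simp at h1
    have hsets : {x : Fin D → Fin r → ℝ |
          (Matrix.of fun i j : Fin r => x (Fin.castLE hrD i) j).det = 0}
        = {x : Fin D → Fin r → ℝ | eval (fun q : Fin D × Fin r => x q.1 q.2) pB = 0} := by
      ext x; rw [Set.mem_setOf_eq, Set.mem_setOf_eq, hev x]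
    rw [hsets]
    exact aux2 D pB hne
  -- Event 2: left `r × r` minor of `A`
  have hS2 : gaussMat r d
      {x : Fin r → Fin d → ℝ | (Matrix.of fun i j : Fin r => x i (Fin.castLE hrd j)).det = 0}
        = 0 := by
    set pA : MvPolynomial (Fin r × Fin d) ℝ :=
      (Matrix.of fun i j : Fin r => (X (i, Fin.castLE hrd j) : MvPolynomial (Fin r × Fin d) ℝ)).det
      with hpA
    have hev : ∀ x : Fin r → Fin d → ℝ, eval (fun q : Fin r × Fin d => x q.1 q.2) pA
        = (Matrix.of fun i j : Fin r => x i (Fin.castLE hrd j)).det := by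
      intro x
      rw [hpA, RingHom.map_det]
      congr 1
      ext i j
      simp
    have hne : pA ≠ 0 := by
      intro h
      have h1 := hev (fun a b => if (a : ℕ) = (b : ℕ) then 1 else 0)
      rw [h] at h1
      have h2 : (Matrix.of fun i j : Fin r =>
          (if ((i : Fin r) : ℕ) = ((Fin.castLE hrd j : Fin d) : ℕ) then (1:ℝ) else 0))
          = (1 : Matrix (Fin r) (Fin r) ℝ) := by
        ext i j
        simp [Matrix.one_apply, Fin.ext_iff]
      rw [h2] at h1
      simp at h1
    have hsets : {x : Fin r → Fin d → ℝ |
          (Matrix.of fun i j : Fin r => x i (Fin.castLE hrd j)).det = 0}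
        = {x : Fin r → Fin d → ℝ | eval (fun q : Fin r × Fin d => x q.1 q.2) pA = 0} := by
      ext x; rw [Set.mem_setOf_eq, Set.mem_setOf_eq, hev x]
    rw [hsets]
    exact aux2 r pA hne
  -- Event 3: entries of the diagonal vectors
  have hvec : ∀ k : ℕ, gaussVec k {v : Fin k → ℝ | ∏ i, v i = 0} = 0 := by
    intro k
    have hne : (∏ i : Fin k, (X i : MvPolynomial (Fin k) ℝ)) ≠ 0 := by
      intro h
      have h1 := congrArg (eval fun _ : Fin k => (1:ℝ)) h
      simp at h1
    have hsets : {v : Fin k → ℝ | ∏ i, v i = 0}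
        = {v : Fin k → ℝ | eval v (∏ i : Fin k, (X i : MvPolynomial (Fin k) ℝ)) = 0} := by
      ext v; simp
    rw [hsets]
    exact aux1 k _ hne
  -- Lift to the product space
  set P := (gaussMat D r).prod ((gaussMat r d).prod ((gaussVec r).prod (gaussVec d))) with hP
  have a1 : ∀ᵐ x ∂P, (Matrix.of fun i j : Fin r => x.1 (Fin.castLE hrD i) j).det ≠ 0 := by
    rw [ae_iff]
    refine measure_mono_null (fun x hx => ?_) (prod_fst_null _ _ hS1)
    simpa using hx
  have a2 : ∀ᵐ x ∂P, (Matrix.of fun i j : Fin r => x.2.1 i (Fin.castLE hrd j)).det ≠ 0 := by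
    rw [ae_iff]
    refine measure_mono_null (fun x hx => ?_) (prod_snd_null _ _ (prod_fst_null _ _ hS2))
    simpa using hx
  have a3 : ∀ᵐ x ∂P, (∏ i, x.2.2.1 i) ≠ 0 := by
    rw [ae_iff]
    refine measure_mono_null (fun x hx => ?_)
      (prod_snd_null _ _ (prod_snd_null _ _ (prod_fst_null _ _ (hvec r))))
    simpa using hx
  have a4 : ∀ᵐ x ∂P, (∏ j, x.2.2.2 j) ≠ 0 := by
    rw [ae_iff]
    refine measure_mono_null (fun x hx => ?_)
      (prod_snd_null _ _ (prod_snd_null _ _ (prod_snd_null _ _ (hvec d))))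
    simpa using hx
  filter_upwards [a1, a2, a3, a4] with x h1 h2 h3 h4
  exact rank_BLAG hrD hrd (Matrix.of x.1) (Matrix.of x.2.1) x.2.2.1 x.2.2.2 h1 h2
    (fun i => Finset.prod_ne_zero_iff.mp h3 i (Finset.mem_univ i))
    (fun j => Finset.prod_ne_zero_iff.mp h4 j (Finset.mem_univ j))
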